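/- For the corner percolation configuration X(ξ,η) with height function H(n+1/2, m+1/2) = ⌈(Xₙ+Yₘ)/2⌉, along any connected component all black faces adjacent to the component have the same height, and all white faces adjacent to the component have the same height; moreover these two heights differ by exactly 1. Consequently, the 'level' of a component (the common height of adjacent black faces) is well defined. -/

import Mathlib

/-- The two-sided partial-sum walk of a sequence `s : ℤ → ℤ`. -/
noncomputable def walk (s : ℤ → ℤ) (n : ℤ) : ℤ :=
  if 0 ≤ n then ∑ i ∈ Finset.Icc 1 n, s i else - ∑ i ∈ Finset.Icc (n + 1) 0, s i

/-- In the configuration `X(ξ,η)`, the vertical edge `{(i,k),(i,k+1)}` is open. -/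
def vOpen (ξ : ℤ → ℤ) (i k : ℤ) : Prop :=
  (ξ i = 1 ∧ Odd (i + k)) ∨ (ξ i = -1 ∧ Even (i + k))

/-- In the configuration `X(ξ,η)`, the horizontal edge `{(k,i),(k+1,i)}` is open. -/
def hOpen (η : ℤ → ℤ) (k i : ℤ) : Prop :=
  (η i = 1 ∧ Odd (k + i)) ∨ (η i = -1 ∧ Even (k + i))

/-- The height `H(n+1/2, m+1/2) = ⌈(Xₙ + Yₘ)/2⌉` of the face indexed by `(n,m)`. -/
noncomputable def height (ξ η : ℤ → ℤ) (n m : ℤ) : ℤ :=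
  ⌈((walk ξ n + walk η m : ℤ) : ℚ) / 2⌉

/-- The graph on `ℤ²` whose edges are the open edges of the configuration `X(ξ,η)`. -/
def configGraph (ξ η : ℤ → ℤ) : SimpleGraph (ℤ × ℤ) :=
  SimpleGraph.fromRel (fun x y =>
    (y = (x.1, x.2 + 1) ∧ vOpen ξ x.1 x.2) ∨ (y = (x.1 + 1, x.2) ∧ hOpen η x.1 x.2))

/-- The four corners of the face indexed by `(n,m)`, i.e. the face `(n+1/2, m+1/2)`. -/
def corners (n m : ℤ) : Set (ℤ × ℤ) := {(n, m), (n + 1, m), (n, m + 1), (n + 1, m + 1)}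

/-- The face indexed by `(n,m)` is adjacent to the connected component of `x₀`: one of
the four edges bounding the face is open and lies in the component of `x₀`. -/
def faceAdjComp (ξ η : ℤ → ℤ) (x₀ : ℤ × ℤ) (n m : ℤ) : Prop :=
  ∃ u v : ℤ × ℤ, (configGraph ξ η).Adj u v ∧ (configGraph ξ η).Reachable x₀ u ∧
    u ∈ corners n m ∧ v ∈ corners n m

lemma ceil_half (a : ℤ) : ⌈((a : ℚ)) / 2⌉ = (a + 1) / 2 := by
  rw [Int.ceil_eq_iff]
  have h1 := Int.mul_ediv_add_emod (a + 1) 2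
  have h2 := Int.emod_nonneg (a + 1) (by norm_num : (2:ℤ) ≠ 0)
  have h3 := Int.emod_lt_of_pos (a + 1) (by norm_num : (0:ℤ) < 2)
  constructor
  · rw [lt_div_iff₀ (by norm_num : (0:ℚ) < 2)]
    have : ((2:ℤ) * ((a+1)/2) - 2 : ℤ) < a := by omega
    calc ((((a+1)/2 : ℤ) : ℚ) - 1) * 2 = (((2 * ((a+1)/2) - 2 : ℤ)) : ℚ) := by push_cast; ring
    _ < a := by exact_mod_cast this
  · rw [div_le_iff₀ (by norm_num : (0:ℚ) < 2)]
    have : a ≤ (2:ℤ) * ((a+1)/2) := by omega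
    calc ((a:ℚ)) ≤ (((2 * ((a+1)/2) : ℤ)) : ℚ) := by exact_mod_cast this
    _ = (((a+1)/2 : ℤ) : ℚ) * 2 := by push_cast; ring

lemma height_eq (ξ η : ℤ → ℤ) (n m : ℤ) :
    height ξ η n m = (walk ξ n + walk η m + 1) / 2 := ceil_half _

lemma walk_step (s : ℤ → ℤ) (n : ℤ) : walk s n = walk s (n - 1) + s n := by
  rcases le_or_gt 1 n with h | h
  · have h0 : (0:ℤ) ≤ n := by omega
    have h0' : (0:ℤ) ≤ n - 1 := by omega
    rw [walk, walk, if_pos h0, if_pos h0']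
    have : Finset.Icc (1:ℤ) n = insert n (Finset.Icc 1 (n-1)) := by
      ext x; simp [Finset.mem_Icc]; omega
    rw [this, Finset.sum_insert (by simp [Finset.mem_Icc])]
    ring
  · have h0 : ¬ (0:ℤ) ≤ n - 1 := by omega
    have hIcc : Finset.Icc (n:ℤ) 0 = insert n (Finset.Icc (n+1) 0) := by
      ext x; simp [Finset.mem_Icc]; omega
    have hneg : walk s n = - ∑ i ∈ Finset.Icc (n+1) 0, s i := by
      rcases eq_or_lt_of_le (by omega : n ≤ 0) with he | hl
      · subst he
        rw [walk, if_pos le_rfl, Finset.Icc_eq_empty (by omega : ¬ (1:ℤ) ≤ 0),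
          show (0:ℤ)+1 = 1 from rfl, Finset.Icc_eq_empty (by omega : ¬ (1:ℤ) ≤ 0)]
        simp
      · rw [walk, if_neg (by omega)]
    rw [hneg, walk, if_neg h0]
    have h1 : (n - 1) + 1 = n := by ring
    rw [h1, hIcc, Finset.sum_insert (by simp [Finset.mem_Icc])]
    ring

lemma walk_parity (s : ℤ → ℤ) (hs : ∀ i, s i = 1 ∨ s i = -1) (n : ℤ) :
    walk s n % 2 = n % 2 := by
  suffices h : Even (walk s n - n) by
    rcases h with ⟨t, ht⟩; omega
  rcases le_or_gt 0 n with h0 | h0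
  · rw [walk, if_pos h0]
    have hc : ((Finset.Icc (1:ℤ) n).card : ℤ) = n := by
      rw [Int.card_Icc]; omega
    have : (∑ i ∈ Finset.Icc (1:ℤ) n, s i) - n
        = ∑ i ∈ Finset.Icc (1:ℤ) n, (s i - 1) := by
      rw [Finset.sum_sub_distrib, Finset.sum_const, nsmul_eq_mul, mul_one, hc]
    rw [this]
    apply Finset.even_sum
    intro i _
    rcases hs i with h | h <;> rw [h] <;> decide
  · rw [walk, if_neg (by omega)]
    have hc : ((Finset.Icc (n+1:ℤ) 0).card : ℤ) = -n := by
      rw [Int.card_Icc]; omega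
    have hsum : (∑ i ∈ Finset.Icc (n+1:ℤ) 0, s i) - (-n)
        = ∑ i ∈ Finset.Icc (n+1:ℤ) 0, (s i - 1) := by
      rw [Finset.sum_sub_distrib, Finset.sum_const, nsmul_eq_mul, mul_one, hc]
    have he : Even ((∑ i ∈ Finset.Icc (n+1:ℤ) 0, s i) - (-n)) := by
      rw [hsum]
      apply Finset.even_sum
      intro i _
      rcases hs i with h | h <;> rw [h] <;> decide
    rcases he with ⟨t, ht⟩
    exact ⟨-t, by omega⟩

lemma mem_corners {x y n m : ℤ} :
    (x, y) ∈ corners n m ↔ (x = n ∨ x = n + 1) ∧ (y = m ∨ y = m + 1) := by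
  simp [corners, Prod.ext_iff]
  omega

lemma adj_cases {ξ η : ℤ → ℤ} {u v : ℤ × ℤ} (h : (configGraph ξ η).Adj u v) :
    (∃ i k, vOpen ξ i k ∧ ((u = (i,k) ∧ v = (i,k+1)) ∨ (u = (i,k+1) ∧ v = (i,k)))) ∨
    (∃ k i, hOpen η k i ∧ ((u = (k,i) ∧ v = (k+1,i)) ∨ (u = (k+1,i) ∧ v = (k,i)))) := by
  rw [configGraph, SimpleGraph.fromRel_adj] at h
  obtain ⟨-, h⟩ := h
  rcases h with (⟨hv, ho⟩ | ⟨hv, ho⟩) | (⟨hv, ho⟩ | ⟨hv, ho⟩)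
  · exact Or.inl ⟨u.1, u.2, ho, Or.inl ⟨rfl, hv⟩⟩
  · exact Or.inr ⟨u.1, u.2, ho, Or.inl ⟨rfl, hv⟩⟩
  · exact Or.inl ⟨v.1, v.2, ho, Or.inr ⟨hv, rfl⟩⟩
  · exact Or.inr ⟨v.1, v.2, ho, Or.inr ⟨hv, rfl⟩⟩

lemma vOpen_unique {ξ : ℤ → ℤ} {i k k' : ℤ} (h : vOpen ξ i k) (h' : vOpen ξ i k')
    (hk : k = k' + 1 ∨ k' = k + 1) : False := by
  simp only [vOpen, Int.even_iff, Int.odd_iff] at h h'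
  omega

lemma hOpen_unique {η : ℤ → ℤ} {i k k' : ℤ} (h : hOpen η k i) (h' : hOpen η k' i)
    (hk : k = k' + 1 ∨ k' = k + 1) : False := by
  simp only [hOpen, Int.even_iff, Int.odd_iff] at h h'
  omega

section main
variable {ξ η : ℤ → ℤ}

lemma acrossV (hξ : ∀ i, ξ i = 1 ∨ ξ i = -1) (hη : ∀ i, η i = 1 ∨ η i = -1)
    {i k n m n' m' : ℤ} (ho : vOpen ξ i k)
    (e1 : (i,k) ∈ corners n m) (e2 : (i,k+1) ∈ corners n m) (he : Even (n+m))
    (f1 : (i,k) ∈ corners n' m') (f2 : (i,k+1) ∈ corners n' m') (ho' : Odd (n'+m')) :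
    height ξ η n' m' = height ξ η n m + 1 := by
  rw [mem_corners] at e1 e2 f1 f2
  have hm : m = k ∧ (n = i - 1 ∨ n = i) := by omega
  have hm' : m' = k ∧ (n' = i - 1 ∨ n' = i) := by omega
  have hstep := walk_step ξ i
  have p1 := walk_parity ξ hξ (i-1)
  have p2 := walk_parity η hη k
  obtain ⟨rfl, hn⟩ := hm
  obtain ⟨rfl, hn'⟩ := hm'
  rw [height_eq, height_eq]
  rw [Int.even_iff] at he
  rw [Int.odd_iff] at ho'
  simp only [vOpen, Int.even_iff, Int.odd_iff] at ho
  rcases hn with rfl | rfl <;> rcases hn' with rfl | rfl <;> omega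

lemma acrossH (hξ : ∀ i, ξ i = 1 ∨ ξ i = -1) (hη : ∀ i, η i = 1 ∨ η i = -1)
    {k i n m n' m' : ℤ} (ho : hOpen η k i)
    (e1 : (k,i) ∈ corners n m) (e2 : (k+1,i) ∈ corners n m) (he : Even (n+m))
    (f1 : (k,i) ∈ corners n' m') (f2 : (k+1,i) ∈ corners n' m') (ho' : Odd (n'+m')) :
    height ξ η n' m' = height ξ η n m + 1 := by
  rw [mem_corners] at e1 e2 f1 f2
  have hm : n = k ∧ (m = i - 1 ∨ m = i) := by omega
  have hm' : n' = k ∧ (m' = i - 1 ∨ m' = i) := by omega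
  have hstep := walk_step η i
  have p1 := walk_parity η hη (i-1)
  have p2 := walk_parity ξ hξ k
  obtain ⟨rfl, hn⟩ := hm
  obtain ⟨rfl, hn'⟩ := hm'
  rw [height_eq, height_eq]
  rw [Int.even_iff] at he
  rw [Int.odd_iff] at ho'
  simp only [hOpen, Int.even_iff, Int.odd_iff] at ho
  rcases hn with rfl | rfl <;> rcases hn' with rfl | rfl <;> omega

lemma exists_black {u v : ℤ × ℤ} (h : (configGraph ξ η).Adj u v) :
    ∃ N M, Even (N + M) ∧ u ∈ corners N M ∧ v ∈ corners N M := by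
  rcases adj_cases h with ⟨i, k, ho, hc⟩ | ⟨k, i, ho, hc⟩
  · rcases Int.even_or_odd (i + k) with hp | hp
    · refine ⟨i, k, hp, ?_, ?_⟩ <;> rcases hc with ⟨rfl, rfl⟩ | ⟨rfl, rfl⟩ <;>
        exact mem_corners.mpr ⟨by omega, by omega⟩
    · refine ⟨i - 1, k, ?_, ?_, ?_⟩
      · rw [Int.even_iff]; rw [Int.odd_iff] at hp; omega
      all_goals rcases hc with ⟨rfl, rfl⟩ | ⟨rfl, rfl⟩ <;>
        exact mem_corners.mpr ⟨by omega, by omega⟩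
  · rcases Int.even_or_odd (k + i) with hp | hp
    · refine ⟨k, i, hp, ?_, ?_⟩ <;> rcases hc with ⟨rfl, rfl⟩ | ⟨rfl, rfl⟩ <;>
        exact mem_corners.mpr ⟨by omega, by omega⟩
    · refine ⟨k, i - 1, ?_, ?_, ?_⟩
      · rw [Int.even_iff]; rw [Int.odd_iff] at hp; omega
      all_goals rcases hc with ⟨rfl, rfl⟩ | ⟨rfl, rfl⟩ <;>
        exact mem_corners.mpr ⟨by omega, by omega⟩

lemma acrossAdj (hξ : ∀ i, ξ i = 1 ∨ ξ i = -1) (hη : ∀ i, η i = 1 ∨ η i = -1)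
    {u v : ℤ × ℤ} {n m N M : ℤ} (h : (configGraph ξ η).Adj u v)
    (hu : u ∈ corners n m) (hv : v ∈ corners n m) (ho : Odd (n + m))
    (hu' : u ∈ corners N M) (hv' : v ∈ corners N M) (he : Even (N + M)) :
    height ξ η n m = height ξ η N M + 1 := by
  rcases adj_cases h with ⟨i, k, hop, hc⟩ | ⟨k, i, hop, hc⟩ <;>
    rcases hc with ⟨hu1, hv1⟩ | ⟨hu1, hv1⟩ <;> subst hu1 <;> subst hv1
  · exact acrossV hξ hη hop hu' hv' he hu hv ho
  · exact acrossV hξ hη hop hv' hu' he hv hu ho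
  · exact acrossH hξ hη hop hu' hv' he hu hv ho
  · exact acrossH hξ hη hop hv' hu' he hv hu ho

lemma pivotVH (hξ : ∀ i, ξ i = 1 ∨ ξ i = -1) (hη : ∀ i, η i = 1 ∨ η i = -1)
    {i1 k1 k2 i2 n m n' m' : ℤ} (ho1 : vOpen ξ i1 k1) (ho2 : hOpen η k2 i2)
    (hi1 : i1 = k2 ∨ i1 = k2 + 1) (hi2 : i2 = k1 ∨ i2 = k1 + 1)
    (e1a : (i1,k1) ∈ corners n m) (e1b : (i1,k1+1) ∈ corners n m) (he : Even (n+m))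
    (e2a : (k2,i2) ∈ corners n' m') (e2b : (k2+1,i2) ∈ corners n' m') (he' : Even (n'+m')) :
    height ξ η n m = height ξ η n' m' := by
  have c1 : (i1,k1) ∈ corners k2 k1 := mem_corners.mpr ⟨by omega, by omega⟩
  have c2 : (i1,k1+1) ∈ corners k2 k1 := mem_corners.mpr ⟨by omega, by omega⟩
  have c3 : (k2,i2) ∈ corners k2 k1 := mem_corners.mpr ⟨by omega, by omega⟩
  have c4 : (k2+1,i2) ∈ corners k2 k1 := mem_corners.mpr ⟨by omega, by omega⟩
  rcases Int.even_or_odd (k2 + k1) with hF | hF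
  · have heq : n = n' ∧ m = m' := by
      rw [mem_corners] at e1a e1b e2a e2b
      rw [Int.even_iff] at he he' hF
      omega
    rw [heq.1, heq.2]
  · have A := acrossV hξ hη ho1 e1a e1b he c1 c2 hF
    have B := acrossH hξ hη ho2 e2a e2b he' c3 c4 hF
    omega

lemma pivot (hξ : ∀ i, ξ i = 1 ∨ ξ i = -1) (hη : ∀ i, η i = 1 ∨ η i = -1)
    {u v w : ℤ × ℤ} {n m n' m' : ℤ}
    (h1 : (configGraph ξ η).Adj u v) (h2 : (configGraph ξ η).Adj u w)
    (hu : u ∈ corners n m) (hv : v ∈ corners n m) (he : Even (n + m))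
    (hu' : u ∈ corners n' m') (hw : w ∈ corners n' m') (he' : Even (n' + m')) :
    height ξ η n m = height ξ η n' m' := by
  rcases adj_cases h1 with ⟨i1, k1, ho1, hc1⟩ | ⟨k1, i1, ho1, hc1⟩ <;>
    rcases adj_cases h2 with ⟨i2, k2, ho2, hc2⟩ | ⟨k2, i2, ho2, hc2⟩
  · -- VV
    obtain ⟨hu1, e1a, e1b⟩ : (u = (i1,k1) ∨ u = (i1,k1+1)) ∧
        (i1,k1) ∈ corners n m ∧ (i1,k1+1) ∈ corners n m := by
      rcases hc1 with ⟨h1', h2'⟩ | ⟨h1', h2'⟩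
      · exact ⟨Or.inl h1', h1' ▸ hu, h2' ▸ hv⟩
      · exact ⟨Or.inr h1', h2' ▸ hv, h1' ▸ hu⟩
    obtain ⟨hu2, e2a, e2b⟩ : (u = (i2,k2) ∨ u = (i2,k2+1)) ∧
        (i2,k2) ∈ corners n' m' ∧ (i2,k2+1) ∈ corners n' m' := by
      rcases hc2 with ⟨h1', h2'⟩ | ⟨h1', h2'⟩
      · exact ⟨Or.inl h1', h1' ▸ hu', h2' ▸ hw⟩
      · exact ⟨Or.inr h1', h2' ▸ hw, h1' ▸ hu'⟩
    have hii : i1 = i2 ∧ (k1 = k2 ∨ k1 = k2 + 1 ∨ k2 = k1 + 1) := by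
      rcases hu1 with h1' | h1' <;> rcases hu2 with h2' | h2' <;>
        rw [h1'] at h2' <;> rw [Prod.ext_iff] at h2' <;>
        simp only at h2' <;> omega
    obtain ⟨rfl, hkk⟩ := hii
    rcases hkk with rfl | hkk | hkk
    · have heq : n = n' ∧ m = m' := by
        rw [mem_corners] at e1a e1b e2a e2b
        rw [Int.even_iff] at he he'
        omega
      rw [heq.1, heq.2]
    · exact (vOpen_unique ho1 ho2 (Or.inl hkk)).elim
    · exact (vOpen_unique ho1 ho2 (Or.inr hkk)).elim
  · -- VH
    obtain ⟨hu1, e1a, e1b⟩ : (u = (i1,k1) ∨ u = (i1,k1+1)) ∧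
        (i1,k1) ∈ corners n m ∧ (i1,k1+1) ∈ corners n m := by
      rcases hc1 with ⟨h1', h2'⟩ | ⟨h1', h2'⟩
      · exact ⟨Or.inl h1', h1' ▸ hu, h2' ▸ hv⟩
      · exact ⟨Or.inr h1', h2' ▸ hv, h1' ▸ hu⟩
    obtain ⟨hu2, e2a, e2b⟩ : (u = (k2,i2) ∨ u = (k2+1,i2)) ∧
        (k2,i2) ∈ corners n' m' ∧ (k2+1,i2) ∈ corners n' m' := by
      rcases hc2 with ⟨h1', h2'⟩ | ⟨h1', h2'⟩
      · exact ⟨Or.inl h1', h1' ▸ hu', h2' ▸ hw⟩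
      · exact ⟨Or.inr h1', h2' ▸ hw, h1' ▸ hu'⟩
    have hii : (i1 = k2 ∨ i1 = k2 + 1) ∧ (i2 = k1 ∨ i2 = k1 + 1) := by
      rcases hu1 with h1' | h1' <;> rcases hu2 with h2' | h2' <;>
        rw [h1'] at h2' <;> rw [Prod.ext_iff] at h2' <;>
        simp only at h2' <;> omega
    exact pivotVH hξ hη ho1 ho2 hii.1 hii.2 e1a e1b he e2a e2b he'
  · -- HV
    obtain ⟨hu1, e1a, e1b⟩ : (u = (k1,i1) ∨ u = (k1+1,i1)) ∧
        (k1,i1) ∈ corners n m ∧ (k1+1,i1) ∈ corners n m := by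
      rcases hc1 with ⟨h1', h2'⟩ | ⟨h1', h2'⟩
      · exact ⟨Or.inl h1', h1' ▸ hu, h2' ▸ hv⟩
      · exact ⟨Or.inr h1', h2' ▸ hv, h1' ▸ hu⟩
    obtain ⟨hu2, e2a, e2b⟩ : (u = (i2,k2) ∨ u = (i2,k2+1)) ∧
        (i2,k2) ∈ corners n' m' ∧ (i2,k2+1) ∈ corners n' m' := by
      rcases hc2 with ⟨h1', h2'⟩ | ⟨h1', h2'⟩
      · exact ⟨Or.inl h1', h1' ▸ hu', h2' ▸ hw⟩
      · exact ⟨Or.inr h1', h2' ▸ hw, h1' ▸ hu'⟩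
    have hii : (i2 = k1 ∨ i2 = k1 + 1) ∧ (i1 = k2 ∨ i1 = k2 + 1) := by
      rcases hu1 with h1' | h1' <;> rcases hu2 with h2' | h2' <;>
        rw [h1'] at h2' <;> rw [Prod.ext_iff] at h2' <;>
        simp only at h2' <;> omega
    exact (pivotVH hξ hη ho2 ho1 hii.1 hii.2 e2a e2b he' e1a e1b he).symm
  · -- HH
    obtain ⟨hu1, e1a, e1b⟩ : (u = (k1,i1) ∨ u = (k1+1,i1)) ∧
        (k1,i1) ∈ corners n m ∧ (k1+1,i1) ∈ corners n m := by
      rcases hc1 with ⟨h1', h2'⟩ | ⟨h1', h2'⟩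
      · exact ⟨Or.inl h1', h1' ▸ hu, h2' ▸ hv⟩
      · exact ⟨Or.inr h1', h2' ▸ hv, h1' ▸ hu⟩
    obtain ⟨hu2, e2a, e2b⟩ : (u = (k2,i2) ∨ u = (k2+1,i2)) ∧
        (k2,i2) ∈ corners n' m' ∧ (k2+1,i2) ∈ corners n' m' := by
      rcases hc2 with ⟨h1', h2'⟩ | ⟨h1', h2'⟩
      · exact ⟨Or.inl h1', h1' ▸ hu', h2' ▸ hw⟩
      · exact ⟨Or.inr h1', h2' ▸ hw, h1' ▸ hu'⟩
    have hii : i1 = i2 ∧ (k1 = k2 ∨ k1 = k2 + 1 ∨ k2 = k1 + 1) := by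
      rcases hu1 with h1' | h1' <;> rcases hu2 with h2' | h2' <;>
        rw [h1'] at h2' <;> rw [Prod.ext_iff] at h2' <;>
        simp only at h2' <;> omega
    obtain ⟨rfl, hkk⟩ := hii
    rcases hkk with rfl | hkk | hkk
    · have heq : n = n' ∧ m = m' := by
        rw [mem_corners] at e1a e1b e2a e2b
        rw [Int.even_iff] at he he'
        omega
      rw [heq.1, heq.2]
    · exact (hOpen_unique ho1 ho2 (Or.inl hkk)).elim
    · exact (hOpen_unique ho1 ho2 (Or.inr hkk)).elim

lemma transfer (hξ : ∀ i, ξ i = 1 ∨ ξ i = -1) (hη : ∀ i, η i = 1 ∨ η i = -1)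
    {u u' : ℤ × ℤ} (p : (configGraph ξ η).Walk u u') :
    ∀ v n m v' n' m', (configGraph ξ η).Adj u v → u ∈ corners n m → v ∈ corners n m →
      Even (n + m) → (configGraph ξ η).Adj u' v' → u' ∈ corners n' m' →
      v' ∈ corners n' m' → Even (n' + m') →
      height ξ η n m = height ξ η n' m' := by
  induction p with
  | nil =>
    intro v n m v' n' m' h1 hu hv he h2 hu' hv' he'
    exact pivot hξ hη h1 h2 hu hv he hu' hv' he'
  | @cons a b c h p ih =>
    intro v n m v' n' m' h1 hu hv he h2 hu' hv' he'
    obtain ⟨N, M, hNM, ha, hb⟩ := exists_black h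
    have step1 : height ξ η n m = height ξ η N M :=
      pivot hξ hη h1 h hu hv he ha hb hNM
    exact step1.trans (ih a N M v' n' m' h.symm hb ha hNM h2 hu' hv' he')

end main

/-- Along any connected component of a corner percolation configuration, all adjacent
black faces (those with `n+m` even) have the same height, all adjacent white faces have
the same height, and these two heights differ by exactly `1`. Hence the level of a
component is well defined. -/
theorem stmt_15 (ξ η : ℤ → ℤ)
    (hξ : ∀ i, ξ i = 1 ∨ ξ i = -1) (hη : ∀ i, η i = 1 ∨ η i = -1) (x₀ : ℤ × ℤ) :
    (∀ n m n' m' : ℤ, faceAdjComp ξ η x₀ n m → faceAdjComp ξ η x₀ n' m' →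
      Even (n + m) → Even (n' + m') → height ξ η n m = height ξ η n' m') ∧
    (∀ n m n' m' : ℤ, faceAdjComp ξ η x₀ n m → faceAdjComp ξ η x₀ n' m' →
      Odd (n + m) → Odd (n' + m') → height ξ η n m = height ξ η n' m') ∧
    (∀ n m n' m' : ℤ, faceAdjComp ξ η x₀ n m → faceAdjComp ξ η x₀ n' m' →
      Even (n + m) → Odd (n' + m') → |height ξ η n m - height ξ η n' m'| = 1) := by
  refine ⟨?_, ?_, ?_⟩
  · rintro n m n' m' ⟨u, v, hadj, hr, hu, hv⟩ ⟨u', v', hadj', hr', hu', hv'⟩ he he'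
    obtain ⟨p⟩ := hr.symm.trans hr'
    exact transfer hξ hη p v n m v' n' m' hadj hu hv he hadj' hu' hv' he'
  · rintro n m n' m' ⟨u, v, hadj, hr, hu, hv⟩ ⟨u', v', hadj', hr', hu', hv'⟩ ho ho'
    obtain ⟨p⟩ := hr.symm.trans hr'
    obtain ⟨N, M, hNM, ha, hb⟩ := exists_black hadj
    obtain ⟨N', M', hNM', ha', hb'⟩ := exists_black hadj'
    have A : height ξ η n m = height ξ η N M + 1 :=
      acrossAdj hξ hη hadj hu hv ho ha hb hNM
    have B : height ξ η n' m' = height ξ η N' M' + 1 :=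
      acrossAdj hξ hη hadj' hu' hv' ho' ha' hb' hNM'
    have C : height ξ η N M = height ξ η N' M' :=
      transfer hξ hη p v N M v' N' M' hadj ha hb hNM hadj' ha' hb' hNM'
    omega
  · rintro n m n' m' ⟨u, v, hadj, hr, hu, hv⟩ ⟨u', v', hadj', hr', hu', hv'⟩ he ho'
    obtain ⟨p⟩ := hr.symm.trans hr'
    obtain ⟨N', M', hNM', ha', hb'⟩ := exists_black hadj'
    have B : height ξ η n' m' = height ξ η N' M' + 1 :=
      acrossAdj hξ hη hadj' hu' hv' ho' ha' hb' hNM'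
    have C : height ξ η n m = height ξ η N' M' :=
      transfer hξ hη p v n m v' N' M' hadj hu hv he hadj' ha' hb' hNM'
    have : height ξ η n m - height ξ η n' m' = -1 := by omega
    rw [this]
    norm_num
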